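/- Let g be a homeomorphism of a compact set K ⊆ ℝ, and let [a,b] be a closed interval containing no break pair of g. Then g restricted to [a,b] ∩ K is a monotone bijection onto [g(a), g(b)] ∩ K (where the interval [g(a),g(b)] is taken with appropriate orientation); in particular g([a,b] ∩ K) = [g(a), g(b)] ∩ K. -/

import Mathlib

open Set

/-- `a` and `b` are the two endpoints of a gap (bounded connected component) of `ℝ \ K`. -/
def IsGap (K : Set ℝ) (a b : ℝ) : Prop :=
  a ∈ K ∧ b ∈ K ∧ a < b ∧ Set.Ioo a b ∩ K = ∅

/-- `{a, b}` is a break pair of the homeomorphism `g` of `K`: it bounds a gap of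
`ℝ \ K` but its image does not. -/
def IsBreakPair (K : Set ℝ) (g : K ≃ₜ K) (a b : K) : Prop :=
  (IsGap K a b ∨ IsGap K b a) ∧
    ¬(IsGap K (g a) (g b) ∨ IsGap K (g b) (g a))

namespace Stmt3Aux

noncomputable def lep (K : Set ℝ) (a t : ℝ) : ℝ := sSup (K ∩ Set.Icc a t)
noncomputable def rep (K : Set ℝ) (b t : ℝ) : ℝ := sInf (K ∩ Set.Icc t b)
open Classical in
noncomputable def gg (K : Set ℝ) (g : K ≃ₜ K) (x : ℝ) : ℝ :=
  if h : x ∈ K then (g ⟨x, h⟩ : ℝ) else 0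
noncomputable def GG (K : Set ℝ) (g : K ≃ₜ K) (a b t : ℝ) : ℝ :=
  gg K g (lep K a t) +
    ((t - lep K a t) / (rep K b t - lep K a t)) * (gg K g (rep K b t) - gg K g (lep K a t))

variable {K : Set ℝ} {g : K ≃ₜ K} {a b t s x : ℝ}

lemma lep_isGreatest (hK : IsCompact K) (ha : a ∈ K) (ht : t ∈ Icc a b) :
    IsGreatest (K ∩ Icc a t) (lep K a t) := by
  have hcpt : IsCompact (K ∩ Icc a t) := hK.inter_right isClosed_Icc
  have hne : (K ∩ Icc a t).Nonempty := ⟨a, ha, le_refl a, ht.1⟩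
  exact ⟨hcpt.sSup_mem hne, fun k hk => le_csSup hcpt.bddAbove hk⟩

lemma rep_isLeast (hK : IsCompact K) (hb : b ∈ K) (ht : t ∈ Icc a b) :
    IsLeast (K ∩ Icc t b) (rep K b t) := by
  have hcpt : IsCompact (K ∩ Icc t b) := hK.inter_right isClosed_Icc
  have hne : (K ∩ Icc t b).Nonempty := ⟨b, hb, ht.2, le_refl b⟩
  exact ⟨hcpt.sInf_mem hne, fun k hk => csInf_le hcpt.bddBelow hk⟩

lemma lep_mem_K (hK : IsCompact K) (ha : a ∈ K) (ht : t ∈ Icc a b) : lep K a t ∈ K :=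
  (lep_isGreatest hK ha ht).1.1

lemma lep_le (hK : IsCompact K) (ha : a ∈ K) (ht : t ∈ Icc a b) : lep K a t ≤ t :=
  (lep_isGreatest hK ha ht).1.2.2

lemma le_lep (hK : IsCompact K) (ha : a ∈ K) (ht : t ∈ Icc a b) : a ≤ lep K a t :=
  (lep_isGreatest hK ha ht).1.2.1

lemma rep_mem_K (hK : IsCompact K) (hb : b ∈ K) (ht : t ∈ Icc a b) : rep K b t ∈ K :=
  (rep_isLeast hK hb ht).1.1

lemma le_rep (hK : IsCompact K) (hb : b ∈ K) (ht : t ∈ Icc a b) : t ≤ rep K b t :=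
  (rep_isLeast hK hb ht).1.2.1

lemma rep_le (hK : IsCompact K) (hb : b ∈ K) (ht : t ∈ Icc a b) : rep K b t ≤ b :=
  (rep_isLeast hK hb ht).1.2.2

lemma lep_eq_of_mem (hK : IsCompact K) (ha : a ∈ K) (ht : t ∈ Icc a b) (htK : t ∈ K) :
    lep K a t = t :=
  le_antisymm (lep_le hK ha ht) ((lep_isGreatest hK ha ht).2 ⟨htK, ht.1, le_refl t⟩)

lemma rep_eq_of_mem (hK : IsCompact K) (hb : b ∈ K) (ht : t ∈ Icc a b) (htK : t ∈ K) :
    rep K b t = t :=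
  le_antisymm ((rep_isLeast hK hb ht).2 ⟨htK, le_refl t, ht.2⟩) (le_rep hK hb ht)

lemma gap_empty (hK : IsCompact K) (ha : a ∈ K) (hb : b ∈ K) (ht : t ∈ Icc a b) :
    Ioo (lep K a t) (rep K b t) ∩ K = ∅ := by
  ext k
  simp only [mem_inter_iff, mem_Ioo, mem_empty_iff_false, iff_false, not_and, and_imp]
  intro h1 h2 hkK
  rcases le_total k t with hkt | htk
  · have : k ≤ lep K a t := (lep_isGreatest hK ha ht).2
      ⟨hkK, le_trans (le_lep hK ha ht) h1.le, hkt⟩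
    linarith
  · have : rep K b t ≤ k := (rep_isLeast hK hb ht).2
      ⟨hkK, htk, le_trans h2.le (rep_le hK hb ht)⟩
    linarith

lemma lep_lt_of_not_mem (hK : IsCompact K) (ha : a ∈ K) (ht : t ∈ Icc a b) (htK : t ∉ K) :
    lep K a t < t :=
  lt_of_le_of_ne (lep_le hK ha ht) fun h => htK (h ▸ lep_mem_K hK ha ht)

lemma lt_rep_of_not_mem (hK : IsCompact K) (hb : b ∈ K) (ht : t ∈ Icc a b) (htK : t ∉ K) :
    t < rep K b t :=
  lt_of_le_of_ne (le_rep hK hb ht) fun h => htK (h ▸ rep_mem_K hK hb ht)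

lemma isGap_of_not_mem (hK : IsCompact K) (ha : a ∈ K) (hb : b ∈ K) (ht : t ∈ Icc a b)
    (htK : t ∉ K) : IsGap K (lep K a t) (rep K b t) :=
  ⟨lep_mem_K hK ha ht, rep_mem_K hK hb ht,
    lt_trans (lep_lt_of_not_mem hK ha ht htK) (lt_rep_of_not_mem hK hb ht htK),
    gap_empty hK ha hb ht⟩

lemma lep_of_mem_Ioo (hK : IsCompact K) (ha : a ∈ K) (hb : b ∈ K) (ht : t ∈ Icc a b)
    (hs : s ∈ Ioo (lep K a t) (rep K b t)) (__hsab : s ∈ Icc a b) : lep K a s = lep K a t := by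
  apply IsGreatest.csSup_eq
  constructor
  · exact ⟨lep_mem_K hK ha ht, le_lep hK ha ht, hs.1.le⟩
  · intro k hk
    by_contra hlt
    push_neg at hlt
    have : k ∈ Ioo (lep K a t) (rep K b t) ∩ K :=
      ⟨⟨hlt, lt_of_le_of_lt hk.2.2 hs.2⟩, hk.1⟩
    rw [gap_empty hK ha hb ht] at this
    exact this

lemma rep_of_mem_Ioo (hK : IsCompact K) (ha : a ∈ K) (hb : b ∈ K) (ht : t ∈ Icc a b)
    (hs : s ∈ Ioo (lep K a t) (rep K b t)) (__hsab : s ∈ Icc a b) : rep K b s = rep K b t := by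
  apply IsLeast.csInf_eq
  constructor
  · exact ⟨rep_mem_K hK hb ht, hs.2.le, rep_le hK hb ht⟩
  · intro k hk
    by_contra hlt
    push_neg at hlt
    have : k ∈ Ioo (lep K a t) (rep K b t) ∩ K :=
      ⟨⟨lt_of_lt_of_le hs.1 hk.2.1, hlt⟩, hk.1⟩
    rw [gap_empty hK ha hb ht] at this
    exact this

lemma gg_mem (hx : x ∈ K) : gg K g x ∈ K := by
  classical
  rw [gg, dif_pos hx]; exact (g ⟨x, hx⟩).2

lemma gg_injOn : InjOn (gg K g) K := by
  intro x hx y hy hxy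
  classical
  rw [gg, dif_pos hx, gg, dif_pos hy] at hxy
  have : g ⟨x, hx⟩ = g ⟨y, hy⟩ := Subtype.ext hxy
  have := g.injective this
  exact congrArg Subtype.val this

lemma continuousOn_gg : ContinuousOn (gg K g) K := by
  rw [continuousOn_iff_continuous_restrict]
  have : K.domRestrict (gg K g) = fun x : K => (g x : ℝ) := by
    funext x
    classical
    simp only [domRestrict_apply, gg, dif_pos x.2]
  rw [this]
  exact continuous_subtype_val.comp g.continuous

lemma GG_eq_of_mem (hK : IsCompact K) (ha : a ∈ K) (hb : b ∈ K) (ht : t ∈ Icc a b)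
    (htK : t ∈ K) : GG K g a b t = gg K g t := by
  rw [GG, lep_eq_of_mem hK ha ht htK, rep_eq_of_mem hK hb ht htK]
  simp

lemma gap_unique {u1 v1 u2 v2 x : ℝ} (h1 : IsGap K u1 v1) (h2 : IsGap K u2 v2)
    (hx1 : x ∈ Ioo u1 v1) (hx2 : x ∈ Ioo u2 v2) : u1 = u2 ∧ v1 = v2 := by
  obtain ⟨hu1, hv1, hlt1, he1⟩ := h1
  obtain ⟨hu2, hv2, hlt2, he2⟩ := h2
  have key : ∀ {p q r r' : ℝ}, p ∈ K → Ioo q r ∩ K = ∅ → q < p → p < r' → r' ≤ r → ¬ q < p ∨ True := by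
    intros; exact Or.inr trivial
  have h12 : u2 ≤ u1 := by
    by_contra h
    push_neg at h
    have : u2 ∈ Ioo u1 v1 ∩ K := ⟨⟨h, lt_trans hx2.1 hx1.2⟩, hu2⟩
    rw [he1] at this; exact this
  have h21 : u1 ≤ u2 := by
    by_contra h
    push_neg at h
    have : u1 ∈ Ioo u2 v2 ∩ K := ⟨⟨h, lt_trans hx1.1 hx2.2⟩, hu1⟩
    rw [he2] at this; exact this
  have h34 : v1 ≤ v2 := by
    by_contra h
    push_neg at h
    have : v2 ∈ Ioo u1 v1 ∩ K := ⟨⟨lt_trans hx1.1 hx2.2, h⟩, hv2⟩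
    rw [he1] at this; exact this
  have h43 : v2 ≤ v1 := by
    by_contra h
    push_neg at h
    have : v1 ∈ Ioo u2 v2 ∩ K := ⟨⟨lt_trans hx2.1 hx1.2, h⟩, hv1⟩
    rw [he2] at this; exact this
  exact ⟨le_antisymm h21 h12, le_antisymm h34 h43⟩

lemma image_gap (hK : IsCompact K) (ha : a ∈ K) (hb : b ∈ K)
    (hreg : ∀ c d : K, (c : ℝ) ∈ Icc a b → (d : ℝ) ∈ Icc a b → ¬ IsBreakPair K g c d)
    (ht : t ∈ Icc a b) (htK : t ∉ K) :
    IsGap K (gg K g (lep K a t)) (gg K g (rep K b t)) ∨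
      IsGap K (gg K g (rep K b t)) (gg K g (lep K a t)) := by
  classical
  have hgap := isGap_of_not_mem hK ha hb ht htK
  have hcK := lep_mem_K hK ha ht
  have hdK := rep_mem_K hK hb ht
  have hcab : lep K a t ∈ Icc a b := ⟨le_lep hK ha ht, le_trans (lep_le hK ha ht) ht.2⟩
  have hdab : rep K b t ∈ Icc a b := ⟨le_trans ht.1 (le_rep hK hb ht), rep_le hK hb ht⟩
  have := hreg ⟨_, hcK⟩ ⟨_, hdK⟩ hcab hdab
  rw [IsBreakPair, not_and, not_not] at this
  have h2 := this (Or.inl hgap)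
  have e1 : (g ⟨lep K a t, hcK⟩ : ℝ) = gg K g (lep K a t) := by rw [gg, dif_pos hcK]
  have e2 : (g ⟨rep K b t, hdK⟩ : ℝ) = gg K g (rep K b t) := by rw [gg, dif_pos hdK]
  rwa [e1, e2] at h2

lemma GG_mem_Ioo_left (hK : IsCompact K) (ha : a ∈ K) (hb : b ∈ K)
    (ht : t ∈ Icc a b) (htK : t ∉ K)
    (h : gg K g (lep K a t) < gg K g (rep K b t)) :
    GG K g a b t ∈ Ioo (gg K g (lep K a t)) (gg K g (rep K b t)) := by
  have h1 := lep_lt_of_not_mem hK ha ht htK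
  have h2 := lt_rep_of_not_mem hK hb ht htK
  have hr0 : 0 < (t - lep K a t) / (rep K b t - lep K a t) :=
    div_pos (by linarith) (by linarith)
  have hr1 : (t - lep K a t) / (rep K b t - lep K a t) < 1 :=
    (div_lt_one (by linarith)).mpr (by linarith)
  constructor <;> [skip; skip] <;> rw [GG] <;> nlinarith

lemma GG_mem_Ioo_right (hK : IsCompact K) (ha : a ∈ K) (hb : b ∈ K)
    (ht : t ∈ Icc a b) (htK : t ∉ K)
    (h : gg K g (rep K b t) < gg K g (lep K a t)) :
    GG K g a b t ∈ Ioo (gg K g (rep K b t)) (gg K g (lep K a t)) := by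
  have h1 := lep_lt_of_not_mem hK ha ht htK
  have h2 := lt_rep_of_not_mem hK hb ht htK
  have hr0 : 0 < (t - lep K a t) / (rep K b t - lep K a t) :=
    div_pos (by linarith) (by linarith)
  have hr1 : (t - lep K a t) / (rep K b t - lep K a t) < 1 :=
    (div_lt_one (by linarith)).mpr (by linarith)
  constructor <;> [skip; skip] <;> rw [GG] <;> nlinarith

lemma GG_not_mem (hK : IsCompact K) (ha : a ∈ K) (hb : b ∈ K)
    (hreg : ∀ c d : K, (c : ℝ) ∈ Icc a b → (d : ℝ) ∈ Icc a b → ¬ IsBreakPair K g c d)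
    (ht : t ∈ Icc a b) (htK : t ∉ K) : GG K g a b t ∉ K := by
  intro hmem
  rcases image_gap hK ha hb hreg ht htK with h | h
  · have hin := GG_mem_Ioo_left hK ha hb ht htK h.2.2.1
    have : GG K g a b t ∈ Ioo _ _ ∩ K := ⟨hin, hmem⟩
    rw [h.2.2.2] at this; exact this
  · have hin := GG_mem_Ioo_right hK ha hb ht htK h.2.2.1
    have : GG K g a b t ∈ Ioo _ _ ∩ K := ⟨hin, hmem⟩
    rw [h.2.2.2] at this; exact this

lemma GG_injOn (hK : IsCompact K) (ha : a ∈ K) (hb : b ∈ K)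
    (hreg : ∀ c d : K, (c : ℝ) ∈ Icc a b → (d : ℝ) ∈ Icc a b → ¬ IsBreakPair K g c d) :
    InjOn (GG K g a b) (Icc a b) := by
  intro s hs t ht hst
  by_cases hsK : s ∈ K <;> by_cases htK : t ∈ K
  · rw [GG_eq_of_mem hK ha hb hs hsK, GG_eq_of_mem hK ha hb ht htK] at hst
    exact gg_injOn hsK htK hst
  · exfalso
    apply GG_not_mem hK ha hb hreg ht htK
    rw [← hst, GG_eq_of_mem hK ha hb hs hsK]
    exact gg_mem hsK
  · exfalso
    apply GG_not_mem hK ha hb hreg hs hsK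
    rw [hst, GG_eq_of_mem hK ha hb ht htK]
    exact gg_mem htK
  · -- both s and t are in gaps
    set cs := lep K a s with hcs
    set ds := rep K b s with hds
    set ct := lep K a t with hct
    set dt := rep K b t with hdt
    have hcsK := lep_mem_K hK ha hs
    have hdsK := rep_mem_K hK hb hs
    have hctK := lep_mem_K hK ha ht
    have hdtK := rep_mem_K hK hb ht
    have hs1 := lep_lt_of_not_mem hK ha hs hsK
    have hs2 := lt_rep_of_not_mem hK hb hs hsK
    have ht1 := lep_lt_of_not_mem hK ha ht htK
    have ht2 := lt_rep_of_not_mem hK hb ht htK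
    have key : cs = ct ∧ ds = dt := by
      rcases image_gap hK ha hb hreg hs hsK with hgs | hgs <;>
        rcases image_gap hK ha hb hreg ht htK with hgt | hgt
      · have h1 := GG_mem_Ioo_left hK ha hb hs hsK hgs.2.2.1
        have h2 := GG_mem_Ioo_left hK ha hb ht htK hgt.2.2.1
        rw [hst] at h1
        obtain ⟨e1, e2⟩ := gap_unique hgs hgt h1 h2
        exact ⟨gg_injOn hcsK hctK e1, gg_injOn hdsK hdtK e2⟩
      · have h1 := GG_mem_Ioo_left hK ha hb hs hsK hgs.2.2.1
        have h2 := GG_mem_Ioo_right hK ha hb ht htK hgt.2.2.1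
        rw [hst] at h1
        obtain ⟨e1, e2⟩ := gap_unique hgs hgt h1 h2
        have f1 := gg_injOn hcsK hdtK e1
        have f2 := gg_injOn hdsK hctK e2
        exfalso; linarith
      · have h1 := GG_mem_Ioo_right hK ha hb hs hsK hgs.2.2.1
        have h2 := GG_mem_Ioo_left hK ha hb ht htK hgt.2.2.1
        rw [hst] at h1
        obtain ⟨e1, e2⟩ := gap_unique hgs hgt h1 h2
        have f1 := gg_injOn hdsK hctK e1
        have f2 := gg_injOn hcsK hdtK e2
        exfalso; linarith
      · have h1 := GG_mem_Ioo_right hK ha hb hs hsK hgs.2.2.1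
        have h2 := GG_mem_Ioo_right hK ha hb ht htK hgt.2.2.1
        rw [hst] at h1
        obtain ⟨e1, e2⟩ := gap_unique hgs hgt h1 h2
        exact ⟨gg_injOn hcsK hctK e2, gg_injOn hdsK hdtK e1⟩
    obtain ⟨ec, ed⟩ := key
    have hΔ : gg K g ds - gg K g cs ≠ 0 := by
      rcases image_gap hK ha hb hreg hs hsK with hgs | hgs
      · have := hgs.2.2.1; intro h; rw [hcs, hds] at *; linarith
      · have := hgs.2.2.1; intro h; rw [hcs, hds] at *; linarith
    rw [GG, GG, ← hcs, ← hds, ← hct, ← hdt, ← ec, ← ed] at hst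
    have : (s - cs) / (ds - cs) = (t - cs) / (ds - cs) := by
      have h := mul_right_cancel₀ hΔ (by linarith : (s - cs) / (ds - cs) * (gg K g ds - gg K g cs) = (t - cs) / (ds - cs) * (gg K g ds - gg K g cs))
      exact h
    have hdc : ds - cs ≠ 0 := by linarith
    field_simp at this
    linarith

lemma combo0 {A B r ε : ℝ} (hr0 : 0 ≤ r) (hr1 : r ≤ 1) (hε : 0 < ε)
    (hA : |A| < ε / 2) (hB : |B| < ε / 2) : |(1 - r) * A + r * B| < ε := by
  rw [abs_lt] at hA hB ⊢
  constructor
  · nlinarith [mul_nonneg (by linarith : (0:ℝ) ≤ 1 - r) (by linarith : (0:ℝ) ≤ ε / 2 + A),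
      mul_nonneg hr0 (by linarith : (0:ℝ) ≤ ε / 2 + B)]
  · nlinarith [mul_nonneg (by linarith : (0:ℝ) ≤ 1 - r) (by linarith : (0:ℝ) ≤ ε / 2 - A),
      mul_nonneg hr0 (by linarith : (0:ℝ) ≤ ε / 2 - B)]

lemma combo1 {A B r M ε : ℝ} (hr0 : 0 ≤ r) (hr1 : r ≤ 1) (hε : 0 < ε) (hM : 0 < M)
    (hA : |A| < ε / 2) (hB : |B| ≤ M) (hrM : r * M ≤ ε / 4) :
    |(1 - r) * A + r * B| < ε := by
  rw [abs_lt] at hA ⊢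
  rw [abs_le] at hB
  constructor
  · nlinarith [mul_nonneg (by linarith : (0:ℝ) ≤ 1 - r) (by linarith : (0:ℝ) ≤ ε / 2 + A),
      mul_nonneg hr0 (by linarith : (0:ℝ) ≤ M + B)]
  · nlinarith [mul_nonneg (by linarith : (0:ℝ) ≤ 1 - r) (by linarith : (0:ℝ) ≤ ε / 2 - A),
      mul_nonneg hr0 (by linarith : (0:ℝ) ≤ M - B)]

lemma combo2 {A B r M ε : ℝ} (hr0 : 0 ≤ r) (hr1 : r ≤ 1) (hε : 0 < ε) (hM : 0 < M)
    (hB : |B| < ε / 2) (hA : |A| ≤ M) (hrM : (1 - r) * M ≤ ε / 4) :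
    |(1 - r) * A + r * B| < ε := by
  have h := combo1 (A := B) (B := A) (r := 1 - r) (M := M) (ε := ε)
    (by linarith) (by linarith) hε hM hB hA (by linarith)
  have e : (1 - (1 - r)) * B + (1 - r) * A = (1 - r) * A + r * B := by ring
  rwa [e] at h

lemma continuousOn_GG (hK : IsCompact K) (ha : a ∈ K) (hb : b ∈ K) :
    ContinuousOn (GG K g a b) (Icc a b) := by
  intro t₀ ht₀
  by_cases ht₀K : t₀ ∈ K
  · -- ε-δ argument at points of K
    rw [Metric.continuousWithinAt_iff]
    intro ε hε
    have hgg := continuousOn_gg (g := g) t₀ ht₀K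
    rw [Metric.continuousWithinAt_iff] at hgg
    obtain ⟨δ₁, hδ₁, hδ₁p⟩ := hgg (ε / 2) (by linarith)
    have hbd : Bornology.IsBounded (gg K g '' K) :=
      (hK.image_of_continuousOn continuousOn_gg).isBounded
    obtain ⟨M₀, hM₀⟩ := hbd.subset_closedBall (gg K g t₀)
    set M : ℝ := max M₀ 1 with hM
    have hMpos : (0:ℝ) < M := lt_of_lt_of_le one_pos (le_max_right _ _)
    have hMb : ∀ k ∈ K, |gg K g k - gg K g t₀| ≤ M := by
      intro k hk
      have := hM₀ (mem_image_of_mem _ hk)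
      rw [Metric.mem_closedBall, Real.dist_eq] at this
      exact le_trans this (le_max_left _ _)
    set δ : ℝ := min (δ₁ / 2) (δ₁ * ε / (8 * M)) with hδdef
    have hδpos : 0 < δ := lt_min (by linarith)
      (div_pos (mul_pos hδ₁ hε) (by linarith))
    have hδδ₁ : δ ≤ δ₁ / 2 := min_le_left _ _
    have hδM : δ * (8 * M) ≤ δ₁ * ε := by
      have := min_le_right (δ₁ / 2) (δ₁ * ε / (8 * M))
      rw [le_div_iff₀ (by linarith : (0:ℝ) < 8 * M)] at this
      exact this
    clear_value M δ
    refine ⟨δ, hδpos, ?_⟩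
    intro y hy hdy
    rw [Real.dist_eq] at hdy
    rw [Real.dist_eq, GG_eq_of_mem hK ha hb ht₀ ht₀K]
    set c := lep K a y with hc
    set d := rep K b y with hd
    have hcK : c ∈ K := lep_mem_K hK ha hy
    have hdK : d ∈ K := rep_mem_K hK hb hy
    have hcy : c ≤ y := lep_le hK ha hy
    have hyd : y ≤ d := le_rep hK hb hy
    have htc' : t₀ ≤ y → t₀ ≤ c := fun h => (lep_isGreatest hK ha hy).2 ⟨ht₀K, ht₀.1, h⟩
    have hdt' : y ≤ t₀ → d ≤ t₀ := fun h => (rep_isLeast hK hb hy).2 ⟨ht₀K, h, ht₀.2⟩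
    by_cases hcd : c = d
    · -- then y ∈ K
      have hyc : y = c := le_antisymm (hcd ▸ hyd) hcy
      have hyK : y ∈ K := hyc ▸ hcK
      rw [GG_eq_of_mem hK ha hb hy hyK]
      have := hδ₁p hyK (by rw [Real.dist_eq]; linarith)
      rw [Real.dist_eq] at this
      linarith
    · have hcd' : c < d := lt_of_le_of_ne (le_trans hcy hyd) hcd
      set r : ℝ := (y - c) / (d - c) with hr
      have hr0 : 0 ≤ r := div_nonneg (by linarith) (by linarith)
      have hr1 : r ≤ 1 := (div_le_one (by linarith)).mpr (by linarith)
      have hrdc : r * (d - c) = y - c := div_mul_cancel₀ _ (by linarith)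
      set A : ℝ := gg K g c - gg K g t₀ with hA
      set B : ℝ := gg K g d - gg K g t₀ with hB
      have hexp : GG K g a b y - gg K g t₀ = (1 - r) * A + r * B := by
        rw [GG, ← hc, ← hd, ← hr, hA, hB]; ring
      rw [hexp]
      have hAM : |A| ≤ M := by rw [hA]; exact hMb c hcK
      have hBM : |B| ≤ M := by rw [hB]; exact hMb d hdK
      have hAd : ∀ u : ℝ, |c - t₀| < δ₁ → |A| < ε / 2 := by
        intro _ h
        rw [hA]
        have := hδ₁p hcK (by rw [Real.dist_eq]; exact h)
        rwa [Real.dist_eq] at this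
      have hBd : ∀ u : ℝ, |d - t₀| < δ₁ → |B| < ε / 2 := by
        intro _ h
        rw [hB]
        have := hδ₁p hdK (by rw [Real.dist_eq]; exact h)
        rwa [Real.dist_eq] at this
      rw [abs_sub_lt_iff] at hdy
      clear_value c d r A B
      rcases le_total t₀ y with hty | hty
      · -- t₀ ≤ y, so t₀ ≤ c ≤ y
        have htc : t₀ ≤ c := htc' hty
        have hAs : |A| < ε / 2 := hAd 0 (by rw [abs_sub_lt_iff]; constructor <;> linarith)
        rcases lt_or_ge (d - t₀) δ₁ with hdt | hdt
        · have hBs : |B| < ε / 2 := hBd 0 (by rw [abs_sub_lt_iff]; constructor <;> linarith)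
          exact combo0 hr0 hr1 hε hAs hBs
        · have hdc2 : δ₁ / 2 ≤ d - c := by linarith
          have hrδ : r * δ₁ ≤ 2 * δ := by
            have h1 : r * (δ₁ / 2) ≤ r * (d - c) :=
              mul_le_mul_of_nonneg_left hdc2 hr0
            rw [hrdc] at h1
            linarith
          have hrM : r * M ≤ ε / 4 := by
            have h1 : r * δ₁ * M ≤ 2 * δ * M :=
              mul_le_mul_of_nonneg_right hrδ (le_of_lt hMpos)
            nlinarith [mul_pos hδ₁ hMpos]
          exact combo1 hr0 hr1 hε hMpos hAs hBM hrM
      · -- y ≤ t₀, so y ≤ d ≤ t₀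
        have hdt : d ≤ t₀ := hdt' hty
        have hBs : |B| < ε / 2 := hBd 0 (by rw [abs_sub_lt_iff]; constructor <;> linarith)
        rcases lt_or_ge (t₀ - c) δ₁ with htc | htc
        · have hAs : |A| < ε / 2 := hAd 0 (by rw [abs_sub_lt_iff]; constructor <;> linarith)
          exact combo0 hr0 hr1 hε hAs hBs
        · have hdc2 : δ₁ / 2 ≤ d - c := by linarith
          have h1rdc : (1 - r) * (d - c) = d - y := by
            rw [sub_mul, one_mul, hrdc]; ring
          have hrδ : (1 - r) * δ₁ ≤ 2 * δ := by
            have h1 : (1 - r) * (δ₁ / 2) ≤ (1 - r) * (d - c) :=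
              mul_le_mul_of_nonneg_left hdc2 (by linarith)
            rw [h1rdc] at h1
            linarith
          have hrM : (1 - r) * M ≤ ε / 4 := by
            have h1 : (1 - r) * δ₁ * M ≤ 2 * δ * M :=
              mul_le_mul_of_nonneg_right hrδ (le_of_lt hMpos)
            nlinarith [mul_pos hδ₁ hMpos]
          exact combo2 hr0 hr1 hε hMpos hBs hAM hrM
  · -- t₀ in a gap: GG is locally affine
    set c := lep K a t₀ with hc
    set d := rep K b t₀ with hd
    have h1 := lep_lt_of_not_mem hK ha ht₀ ht₀K
    have h2 := lt_rep_of_not_mem hK hb ht₀ ht₀K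
    have hnhds : Ioo c d ∈ nhds t₀ := Ioo_mem_nhds h1 h2
    set L : ℝ → ℝ := fun s =>
      gg K g c + ((s - c) / (d - c)) * (gg K g d - gg K g c) with hL
    have hLcont : Continuous L := by
      apply continuous_const.add
      exact (((continuous_id.sub continuous_const).div_const _).mul continuous_const)
    have heq : ∀ s ∈ Ioo c d ∩ Icc a b, GG K g a b s = L s := by
      rintro s ⟨hsIoo, hsab⟩
      rw [GG, lep_of_mem_Ioo hK ha hb ht₀ hsIoo hsab, rep_of_mem_Ioo hK ha hb ht₀ hsIoo hsab]
    have hev : GG K g a b =ᶠ[nhdsWithin t₀ (Icc a b)] L := by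
      filter_upwards [mem_nhdsWithin_of_mem_nhds hnhds, self_mem_nhdsWithin] with s hs1 hs2
      exact heq s ⟨hs1, hs2⟩
    have hLt₀ : GG K g a b t₀ = L t₀ := rfl
    exact (hLcont.continuousWithinAt).congr_of_eventuallyEq hev hLt₀

end Stmt3Aux

/-- If `[a, b]` contains no break pair of `g`, then `g` is monotone on `[a,b] ∩ K`
and maps it onto `[g a, g b] ∩ K` (with the appropriate orientation). -/
theorem stmt3 (K : Set ℝ) (hK : IsCompact K) (g : K ≃ₜ K) (a b : K)
    (hab : (a : ℝ) ≤ b)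
    (hreg : ∀ c d : K, (c : ℝ) ∈ Set.Icc (a : ℝ) b → (d : ℝ) ∈ Set.Icc (a : ℝ) b →
      ¬ IsBreakPair K g c d) :
    (MonotoneOn (fun x : K => (g x : ℝ)) {x : K | (x : ℝ) ∈ Set.Icc (a : ℝ) b} ∨
      AntitoneOn (fun x : K => (g x : ℝ)) {x : K | (x : ℝ) ∈ Set.Icc (a : ℝ) b}) ∧
    Set.InjOn (fun x : K => (g x : ℝ)) {x : K | (x : ℝ) ∈ Set.Icc (a : ℝ) b} ∧
    (fun x : K => (g x : ℝ)) '' {x : K | (x : ℝ) ∈ Set.Icc (a : ℝ) b} =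
      Set.Icc (min (g a : ℝ) (g b : ℝ)) (max (g a : ℝ) (g b : ℝ)) ∩ K := by
  classical
  open Stmt3Aux in
  have hcont : ContinuousOn (GG K g a b) (Set.Icc (a : ℝ) b) :=
    continuousOn_GG hK a.2 b.2
  have hinj : Set.InjOn (GG K g a b) (Set.Icc (a : ℝ) b) :=
    GG_injOn hK a.2 b.2 hreg
  have hmb := ContinuousOn.strictMonoOn_of_injOn_Icc' hab hcont hinj
  have hGx : ∀ x : K, (x : ℝ) ∈ Set.Icc (a : ℝ) b →
      Stmt3Aux.GG K g a b (x : ℝ) = (g x : ℝ) := by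
    intro x hx
    rw [Stmt3Aux.GG_eq_of_mem hK a.2 b.2 hx x.2, Stmt3Aux.gg, dif_pos x.2]
  have haIcc : (a : ℝ) ∈ Set.Icc (a : ℝ) b := Set.left_mem_Icc.mpr hab
  have hbIcc : (b : ℝ) ∈ Set.Icc (a : ℝ) b := Set.right_mem_Icc.mpr hab
  have hGa : Stmt3Aux.GG K g a b (a : ℝ) = (g a : ℝ) := hGx a haIcc
  have hGb : Stmt3Aux.GG K g a b (b : ℝ) = (g b : ℝ) := hGx b hbIcc
  refine ⟨?_, ?_, ?_⟩
  · rcases hmb with h | h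
    · left
      intro x hx y hy hxy
      have h1 := h.monotoneOn hx hy (Subtype.coe_le_coe.mpr hxy)
      rwa [hGx x hx, hGx y hy] at h1
    · right
      intro x hx y hy hxy
      have h1 := h.antitoneOn hx hy (Subtype.coe_le_coe.mpr hxy)
      rwa [hGx x hx, hGx y hy] at h1
  · intro x _ y _ hxy
    exact g.injective (Subtype.ext hxy)
  · rcases hmb with h | h
    · -- monotone case : g a ≤ g b
      have hgab : (g a : ℝ) ≤ (g b : ℝ) := by
        have := h.monotoneOn haIcc hbIcc hab
        rwa [hGa, hGb] at this
      rw [min_eq_left hgab, max_eq_right hgab]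
      apply Set.Subset.antisymm
      · rintro v ⟨x, hx, rfl⟩
        refine ⟨⟨?_, ?_⟩, (g x).2⟩
        · have := h.monotoneOn haIcc hx hx.1
          rwa [hGa, hGx x hx] at this
        · have := h.monotoneOn hx hbIcc hx.2
          rwa [hGb, hGx x hx] at this
      · rintro v ⟨hv1, hv2⟩
        have hivt := intermediate_value_Icc hab hcont
        have : v ∈ Set.Icc (Stmt3Aux.GG K g a b (a : ℝ)) (Stmt3Aux.GG K g a b (b : ℝ)) := by
          rw [hGa, hGb]; exact hv1
        obtain ⟨t, htI, htv⟩ := hivt this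
        have htK : t ∈ K := by
          by_contra h'
          exact Stmt3Aux.GG_not_mem hK a.2 b.2 hreg htI h' (htv ▸ hv2)
        refine ⟨⟨t, htK⟩, htI, ?_⟩
        have := hGx ⟨t, htK⟩ htI
        simp only at this ⊢
        rw [← this]
        exact htv
    · -- antitone case : g b ≤ g a
      have hgba : (g b : ℝ) ≤ (g a : ℝ) := by
        have := h.antitoneOn haIcc hbIcc hab
        rwa [hGa, hGb] at this
      rw [min_eq_right hgba, max_eq_left hgba]
      apply Set.Subset.antisymm
      · rintro v ⟨x, hx, rfl⟩
        refine ⟨⟨?_, ?_⟩, (g x).2⟩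
        · have := h.antitoneOn hx hbIcc hx.2
          rwa [hGb, hGx x hx] at this
        · have := h.antitoneOn haIcc hx hx.1
          rwa [hGa, hGx x hx] at this
      · rintro v ⟨hv1, hv2⟩
        have hivt := intermediate_value_Icc' hab hcont
        have : v ∈ Set.Icc (Stmt3Aux.GG K g a b (b : ℝ)) (Stmt3Aux.GG K g a b (a : ℝ)) := by
          rw [hGa, hGb]; exact hv1
        obtain ⟨t, htI, htv⟩ := hivt this
        have htK : t ∈ K := by
          by_contra h'
          exact Stmt3Aux.GG_not_mem hK a.2 b.2 hreg htI h' (htv ▸ hv2)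
        refine ⟨⟨t, htK⟩, htI, ?_⟩
        have := hGx ⟨t, htK⟩ htI
        simp only at this ⊢
        rw [← this]
        exact htv
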